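/- Convergence rate for the continuous Krasnosel'skiĭ–Mann dynamics: Let T : H → H be nonexpansive with Fix T ≠ ∅, λ : [0,∞) → (0,1) measurable with 0 < inf_{t≥0} λ(t) ≤ sup_{t≥0} λ(t) < 1, and x the solution of ẋ(t) = λ(t)(T(x(t)) − x(t)). Set τ̲ = inf_{t≥0} λ(t)(1−λ(t)) > 0. Then for all t ≥ 0, t·‖ẋ(t)‖² ≤ t·‖T(x(t)) − x(t)‖² ≤ (2/τ̲) ∫_{t/2}^{t} λ(s)(1−λ(s))‖T(x(s)) − x(s)‖² ds, and the right-hand side integral tends to 0 as t → ∞. -/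

import Mathlib

open Filter MeasureTheory Set Topology
open scoped RealInnerProductSpace

lemma km_anti {H : Type*} [NormedAddCommGroup H] [InnerProductSpace ℝ H]
    (T : H → H) (hT : ∀ a b : H, ‖T a - T b‖ ≤ ‖a - b‖)
    (lam : ℝ → ℝ) (hlam : ∀ t ≥ (0:ℝ), lam t ∈ Ioo (0:ℝ) 1)
    (x xd : ℝ → H)
    (hx : ∀ t ≥ (0:ℝ), HasDerivAt x (xd t) t)
    (hode : ∀ t ≥ (0:ℝ), xd t = lam t • (T (x t) - x t)) :
    AntitoneOn (fun t => ‖T (x t) - x t‖) (Ici (0:ℝ)) := by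
  set w : ℝ → ℝ := fun t => ‖T (x t) - x t‖ with hwdef
  have hTlip : LipschitzWith 1 T :=
    LipschitzWith.of_dist_le_mul (by intro p q; simpa [dist_eq_norm] using hT p q)
  have hxc : ContinuousOn x (Ici 0) := fun t ht => ((hx t ht).continuousAt).continuousWithinAt
  have hwc : ContinuousOn w (Ici 0) :=
    ((hTlip.continuous.comp_continuousOn hxc).sub hxc).norm
  intro s hs t ht hst
  have hIcc : Icc s t ⊆ Ici (0:ℝ) := fun z hz => le_trans hs hz.1
  have key : ∀ u ∈ Ico s t, ∀ r : ℝ, (0:ℝ) < r → ∃ᶠ z in 𝓝[>] u, slope w u z < r := by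
    intro u hu r hr
    have hu0 : (0:ℝ) ≤ u := le_trans hs hu.1
    have hlu := hlam u hu0
    have hxdu := hode u hu0
    have hd := hx u hu0
    apply Eventually.frequently
    have hO : (fun z => x z - x u - (z - u) • xd u) =o[𝓝 u] fun z => z - u :=
      hasDerivAt_iff_isLittleO.mp hd
    have hev : ∀ᶠ z in 𝓝 u, ‖x z - x u - (z - u) • xd u‖ ≤ r/3 * ‖z - u‖ :=
      hO.def (by linarith)
    have hev' : ∀ᶠ z in 𝓝[>] u, ‖x z - x u - (z - u) • xd u‖ ≤ r/3 * ‖z - u‖ :=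
      nhdsWithin_le_nhds hev
    have hIoo : Ioo u (u + 1 / lam u) ∈ 𝓝[>] u :=
      Ioo_mem_nhdsGT_of_mem ⟨le_refl u, lt_add_of_pos_right u (one_div_pos.mpr hlu.1)⟩
    filter_upwards [hev', hIoo] with z hz1 hz2
    have hzu : 0 < z - u := sub_pos.mpr hz2.1
    have hzl : (z - u) * lam u ≤ 1 := by
      have h1 : z - u < 1 / lam u := by linarith [hz2.2]
      rw [lt_div_iff₀ hlu.1] at h1
      linarith
    have hnz : ‖z - u‖ = z - u := by rw [Real.norm_eq_abs, abs_of_pos hzu]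
    rw [hnz] at hz1
    -- norm of xd u
    have hxdnorm : ‖xd u‖ = lam u * w u := by
      rw [hxdu, norm_smul, Real.norm_eq_abs, abs_of_pos hlu.1]
    -- first bound
    have h1 : ‖x z - x u‖ ≤ (z - u) * (lam u * w u) + r/3 * (z - u) := by
      have : ‖x z - x u‖ ≤ ‖(z - u) • xd u‖ + ‖x z - x u - (z - u) • xd u‖ := by
        have := norm_add_le ((z - u) • xd u) (x z - x u - (z - u) • xd u)
        simpa [add_sub_cancel] using this
      rw [norm_smul, Real.norm_eq_abs, abs_of_pos hzu, hxdnorm] at this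
      linarith
    -- second bound
    have h2 : ‖T (x u) - x z‖ ≤ (1 - (z - u) * lam u) * w u + r/3 * (z - u) := by
      have heq : T (x u) - x z =
          (1 - (z - u) * lam u) • (T (x u) - x u) - (x z - x u - (z - u) • xd u) := by
        rw [hxdu]; module
      rw [heq]
      have := norm_sub_le ((1 - (z - u) * lam u) • (T (x u) - x u))
        (x z - x u - (z - u) • xd u)
      rw [norm_smul, Real.norm_eq_abs, abs_of_nonneg (by linarith : (0:ℝ) ≤ 1 - (z - u) * lam u)] at this
      have : ‖(1 - (z - u) * lam u) • (T (x u) - x u) - (x z - x u - (z - u) • xd u)‖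
          ≤ (1 - (z - u) * lam u) * w u + ‖x z - x u - (z - u) • xd u‖ := this
      linarith
    have h3 : w z ≤ ‖x z - x u‖ + ‖T (x u) - x z‖ := by
      calc w z = ‖T (x z) - x z‖ := rfl
        _ ≤ ‖T (x z) - T (x u)‖ + ‖T (x u) - x z‖ := norm_sub_le_norm_sub_add_norm_sub _ _ _
        _ ≤ ‖x z - x u‖ + ‖T (x u) - x z‖ := by
            have := hT (x z) (x u); linarith
    have hwz : w z ≤ w u + 2 * (r/3) * (z - u) := by nlinarith
    show slope w u z < r
    rw [slope_def_field]
    rw [div_lt_iff₀ hzu]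
    nlinarith
  have := image_le_of_liminf_slope_right_le_deriv_boundary
    (f := w) (a := s) (b := t) (hwc.mono hIcc)
    (B := fun _ => w s) (B' := fun _ => 0) (le_refl _) continuousOn_const
    (fun u _ => hasDerivWithinAt_const u _ (w s)) key
  exact this (right_mem_Icc.mpr hst)


open Filter MeasureTheory Set Topology
open scoped RealInnerProductSpace

set_option maxHeartbeats 1000000 in
theorem stmt5
    {H : Type*} [NormedAddCommGroup H] [InnerProductSpace ℝ H] [CompleteSpace H]
    (T : H → H) (hT : ∀ a b : H, ‖T a - T b‖ ≤ ‖a - b‖)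
    (hfix : ∃ y : H, T y = y)
    (lam : ℝ → ℝ) (hlam_meas : Measurable lam)
    (hlam : ∀ t ≥ (0:ℝ), lam t ∈ Ioo (0:ℝ) 1)
    (a b : ℝ) (ha : 0 < a) (hb : b < 1)
    (hbounds : ∀ t ≥ (0:ℝ), a ≤ lam t ∧ lam t ≤ b)
    (x xd : ℝ → H) (x₀ : H) (hx0 : x 0 = x₀)
    (hx : ∀ t ≥ (0:ℝ), HasDerivAt x (xd t) t)
    (hode : ∀ t ≥ (0:ℝ), xd t = lam t • (T (x t) - x t))
    (tl : ℝ) (htl : tl = ⨅ t : Ici (0:ℝ), lam t * (1 - lam t)) :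
    0 < tl ∧
    (∀ t ≥ (0:ℝ),
      t * ‖xd t‖ ^ 2 ≤ t * ‖T (x t) - x t‖ ^ 2 ∧
      t * ‖T (x t) - x t‖ ^ 2 ≤
        (2 / tl) * ∫ s in (t/2)..t, lam s * (1 - lam s) * ‖T (x s) - x s‖ ^ 2) ∧
    Tendsto (fun t => ∫ s in (t/2)..t, lam s * (1 - lam s) * ‖T (x s) - x s‖ ^ 2)
      atTop (𝓝 0) := by
  obtain ⟨y, hy⟩ := hfix
  set w : ℝ → ℝ := fun s => ‖T (x s) - x s‖ with hwdef
  set g : ℝ → ℝ := fun s => lam s * (1 - lam s) * ‖T (x s) - x s‖ ^ 2 with hgdef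
  have hanti : AntitoneOn w (Ici (0:ℝ)) := km_anti T hT lam hlam x xd hx hode
  have hTlip : LipschitzWith 1 T :=
    LipschitzWith.of_dist_le_mul (by intro p q; simpa [dist_eq_norm] using hT p q)
  have hxc : ContinuousOn x (Ici 0) := fun t ht => ((hx t ht).continuousAt).continuousWithinAt
  have hwc : ContinuousOn w (Ici 0) :=
    ((hTlip.continuous.comp_continuousOn hxc).sub hxc).norm
  -- basic facts
  have hbdd : BddBelow (range fun t : Ici (0:ℝ) => lam t * (1 - lam t)) := by
    refine ⟨0, ?_⟩
    rintro z ⟨t, rfl⟩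
    have h := hlam t t.2
    show (0:ℝ) ≤ lam ↑t * (1 - lam ↑t)
    exact le_of_lt (mul_pos h.1 (by linarith [h.2]))
  have htl_le : ∀ s, 0 ≤ s → tl ≤ lam s * (1 - lam s) := by
    intro s hs
    rw [htl]
    exact ciInf_le hbdd ⟨s, hs⟩
  have htl_pos : 0 < tl := by
    rw [htl]
    refine lt_of_lt_of_le (show (0:ℝ) < a * (1 - b) by nlinarith) (le_ciInf ?_)
    rintro ⟨t, ht⟩
    obtain ⟨h1, h2⟩ := hbounds t ht
    have h3 := hlam t ht
    show a * (1 - b) ≤ lam t * (1 - lam t)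
    nlinarith [h3.1, h3.2]
  -- integrability of g on intervals in [0,∞)
  have hg_nonneg : ∀ s, 0 ≤ s → 0 ≤ g s := by
    intro s hs
    have h := hlam s hs
    show (0:ℝ) ≤ lam s * (1 - lam s) * ‖T (x s) - x s‖ ^ 2
    exact mul_nonneg (mul_nonneg h.1.le (by linarith [h.2])) (sq_nonneg _)
  have hg_int : ∀ c d : ℝ, 0 ≤ c → c ≤ d → IntervalIntegrable g volume c d := by
    intro c d hc hcd
    rw [intervalIntegrable_iff, uIoc_of_le hcd]
    have hsub : Ioc c d ⊆ Ici (0:ℝ) := fun z hz => le_trans hc hz.1.le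
    constructor
    · exact ((hlam_meas.mul (measurable_const.sub hlam_meas)).aestronglyMeasurable).mul
        (((hwc.mono hsub).pow 2).aestronglyMeasurable measurableSet_Ioc)
    · haveI : IsFiniteMeasure (volume.restrict (Ioc c d)) :=
        ⟨by rw [Measure.restrict_apply_univ]; exact measure_Ioc_lt_top⟩
      apply HasFiniteIntegral.of_bounded (C := w 0 ^ 2)
      refine ae_restrict_of_forall_mem measurableSet_Ioc ?_
      intro s hs
      have hs0 : (0:ℝ) ≤ s := le_trans hc hs.1.le
      have hws : w s ≤ w 0 := hanti (self_mem_Ici) hs0 hs0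
      have hw0 : 0 ≤ w s := norm_nonneg _
      have h := hlam s hs0
      have hgs : g s = lam s * (1 - lam s) * w s ^ 2 := rfl
      rw [Real.norm_eq_abs, abs_of_nonneg (hg_nonneg s hs0), hgs]
      have h4 : lam s * (1 - lam s) ≤ 1 := by nlinarith [h.1, h.2]
      have h5 : w s ^ 2 ≤ w 0 ^ 2 := by nlinarith
      calc lam s * (1 - lam s) * w s ^ 2 ≤ 1 * (w s ^ 2) :=
            mul_le_mul_of_nonneg_right h4 (sq_nonneg _)
        _ = w s ^ 2 := one_mul _
        _ ≤ w 0 ^ 2 := h5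
  -- Lyapunov bound: ∫₀ʳ g ≤ ‖x₀ - y‖²
  have hkey : ∀ r : ℝ, 0 ≤ r → (∫ s in (0:ℝ)..r, g s) ≤ ‖x₀ - y‖ ^ 2 := by
    intro r hr
    set p : ℝ → ℝ := fun t => lam t * ⟪T (x t) - x t, x t - y⟫ with hpdef
    have hinnerc : ContinuousOn (fun t => ⟪T (x t) - x t, x t - y⟫) (Ici 0) := by
      exact ContinuousOn.inner ((hTlip.continuous.comp_continuousOn hxc).sub hxc)
        (hxc.sub continuousOn_const)
    -- integrability of 2*p on [0,r]
    have hM : ∃ M : ℝ, ∀ s ∈ Icc (0:ℝ) r, ‖x s - y‖ ≤ M := by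
      obtain ⟨z, _, hz⟩ := isCompact_Icc.exists_isMaxOn (nonempty_Icc.mpr hr)
        ((hxc.mono (Icc_subset_Ici_self)).sub continuousOn_const).norm
      exact ⟨‖x z - y‖, fun s hs => hz hs⟩
    obtain ⟨M, hM⟩ := hM
    have hp_int0 : IntervalIntegrable p volume 0 r := by
      rw [intervalIntegrable_iff, uIoc_of_le hr]
      have hsub : Ioc (0:ℝ) r ⊆ Ici (0:ℝ) := fun z hz => hz.1.le
      constructor
      · exact (hlam_meas.aestronglyMeasurable).mul
          ((hinnerc.mono hsub).aestronglyMeasurable measurableSet_Ioc)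
      · haveI : IsFiniteMeasure (volume.restrict (Ioc (0:ℝ) r)) :=
          ⟨by rw [Measure.restrict_apply_univ]; exact measure_Ioc_lt_top⟩
        apply HasFiniteIntegral.of_bounded (C := w 0 * M)
        refine ae_restrict_of_forall_mem measurableSet_Ioc ?_
        intro s hs
        have hs0 : (0:ℝ) ≤ s := hs.1.le
        have h := hlam s hs0
        have hws : w s ≤ w 0 := hanti (self_mem_Ici) hs0 hs0
        have hMs : ‖x s - y‖ ≤ M := hM s ⟨hs0, hs.2⟩
        have hip : |⟪T (x s) - x s, x s - y⟫| ≤ w s * ‖x s - y‖ :=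
          abs_real_inner_le_norm _ _
        have hw0 : 0 ≤ w s := norm_nonneg _
        have hMnn : 0 ≤ ‖x s - y‖ := norm_nonneg _
        have hps : p s = lam s * ⟪T (x s) - x s, x s - y⟫ := rfl
        rw [Real.norm_eq_abs, hps, abs_mul, abs_of_pos h.1]
        have hw00 : (0:ℝ) ≤ w 0 := norm_nonneg _
        calc lam s * |⟪T (x s) - x s, x s - y⟫| ≤ 1 * |⟪T (x s) - x s, x s - y⟫| :=
              mul_le_mul_of_nonneg_right h.2.le (abs_nonneg _)
          _ = |⟪T (x s) - x s, x s - y⟫| := one_mul _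
          _ ≤ w s * ‖x s - y‖ := hip
          _ ≤ w 0 * M := mul_le_mul hws hMs hMnn hw00
    have hp_int : IntervalIntegrable (fun t => 2 * p t) volume 0 r := hp_int0.const_mul 2
    -- FTC
    set φ : ℝ → ℝ := fun t => ‖x t - y‖ ^ 2 with hφdef
    have hφd : ∀ t ∈ uIcc (0:ℝ) r, HasDerivAt φ (2 * p t) t := by
      intro t ht
      rw [uIcc_of_le hr] at ht
      have ht0 : (0:ℝ) ≤ t := ht.1
      have h1 : HasDerivAt (fun u => x u - y) (xd t) t := (hx t ht0).sub_const y
      have h2 := h1.inner ℝ h1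
      have heq : φ = fun u => ⟪x u - y, x u - y⟫ := by
        funext u; rw [real_inner_self_eq_norm_sq]
      rw [heq]
      refine h2.congr_deriv ?_
      rw [hode t ht0, real_inner_smul_left, real_inner_smul_right, real_inner_comm]
      ring
    have hFTC : (∫ s in (0:ℝ)..r, 2 * p s) = φ r - φ 0 :=
      intervalIntegral.integral_eq_sub_of_hasDerivAt hφd hp_int
    -- pointwise: g ≤ -(2*p)
    have hpt : ∀ s ∈ Icc (0:ℝ) r, g s ≤ -(2 * p s) := by
      intro s hs
      have hs0 : (0:ℝ) ≤ s := hs.1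
      have h := hlam s hs0
      have hkey2 : ⟪T (x s) - x s, x s - y⟫ ≤ -(1/2) * w s ^ 2 := by
        have hn : ‖T (x s) - y‖ ≤ ‖x s - y‖ := by
          have := hT (x s) y; rwa [hy] at this
        have hsq : ‖T (x s) - y‖ ^ 2 ≤ ‖x s - y‖ ^ 2 :=
          pow_le_pow_left₀ (norm_nonneg _) hn 2
        have hexp : ‖T (x s) - y‖ ^ 2 =
            w s ^ 2 + 2 * ⟪T (x s) - x s, x s - y⟫ + ‖x s - y‖ ^ 2 := by
          have h3 : T (x s) - y = (T (x s) - x s) + (x s - y) := by abel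
          rw [h3, norm_add_sq_real]
        nlinarith
      have hgs : g s = lam s * (1 - lam s) * w s ^ 2 := rfl
      have hps : p s = lam s * ⟪T (x s) - x s, x s - y⟫ := rfl
      rw [hgs, hps]
      nlinarith [mul_le_mul_of_nonneg_left hkey2 h.1.le, sq_nonneg (lam s * w s)]
    have hmono := intervalIntegral.integral_mono_on hr (hg_int 0 r le_rfl hr) hp_int.neg hpt
    simp only [Pi.neg_apply] at hmono
    rw [intervalIntegral.integral_neg, hFTC] at hmono
    have hφr : 0 ≤ φ r := sq_nonneg _
    have hφ0 : φ 0 = ‖x₀ - y‖ ^ 2 := by rw [hφdef]; simp [hx0]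
    rw [← hφ0]
    linarith
  refine ⟨htl_pos, ?_, ?_⟩
  · -- pointwise inequalities
    intro t ht
    have hlt := hlam t ht
    have hxdn : ‖xd t‖ = lam t * w t := by
      rw [hode t ht, norm_smul, Real.norm_eq_abs, abs_of_pos hlt.1]
    constructor
    · have h1 : ‖xd t‖ ≤ w t := by
        rw [hxdn]; nlinarith [norm_nonneg (T (x t) - x t), hlt.1, hlt.2]
      have := pow_le_pow_left₀ (norm_nonneg (xd t)) h1 2
      exact mul_le_mul_of_nonneg_left this ht
    · have hhalf : t / 2 ≤ t := by linarith
      have hhalf0 : (0:ℝ) ≤ t / 2 := by linarith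
      have hpt : ∀ s ∈ Icc (t/2) t, tl * w t ^ 2 ≤ g s := by
        intro s hs
        have hs0 : (0:ℝ) ≤ s := le_trans hhalf0 hs.1
        have hws : w t ≤ w s := hanti (mem_Ici.mpr hs0) (mem_Ici.mpr ht) hs.2
        have hw0 : 0 ≤ w t := norm_nonneg _
        have h1 := htl_le s hs0
        have hsq : w t ^ 2 ≤ w s ^ 2 := pow_le_pow_left₀ hw0 hws 2
        have hgs : g s = lam s * (1 - lam s) * w s ^ 2 := rfl
        have h2 := hlam s hs0
        rw [hgs]
        nlinarith [h2.1, h2.2, sq_nonneg (w s)]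
      have hmono := intervalIntegral.integral_mono_on hhalf
        (intervalIntegrable_const) (hg_int (t/2) t hhalf0 hhalf) hpt
      rw [intervalIntegral.integral_const, smul_eq_mul] at hmono
      have hI : (t - t/2) * (tl * w t ^ 2) = t/2 * (tl * w t ^ 2) := by ring
      rw [hI] at hmono
      rw [div_mul_eq_mul_div, le_div_iff₀ htl_pos]
      nlinarith
  · -- convergence to 0
    set F : ℝ → ℝ := fun r => ∫ s in (0:ℝ)..(max r 0), g s with hFdef
    have hFmono : Monotone F := by
      intro r1 r2 h12
      have hm1 : (0:ℝ) ≤ max r1 0 := le_max_right _ _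
      have hm12 : max r1 0 ≤ max r2 0 := max_le_max h12 le_rfl
      have hadd := intervalIntegral.integral_add_adjacent_intervals
        (hg_int 0 (max r1 0) le_rfl hm1) (hg_int (max r1 0) (max r2 0) hm1 hm12)
      have hpos : 0 ≤ ∫ s in (max r1 0)..(max r2 0), g s :=
        intervalIntegral.integral_nonneg hm12 (fun u hu => hg_nonneg u (le_trans hm1 hu.1))
      show (∫ s in (0:ℝ)..(max r1 0), g s) ≤ ∫ s in (0:ℝ)..(max r2 0), g s
      linarith
    have hFbdd : BddAbove (range F) := by
      refine ⟨‖x₀ - y‖ ^ 2, ?_⟩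
      rintro z ⟨r, rfl⟩
      exact hkey (max r 0) (le_max_right _ _)
    have htend : Tendsto F atTop (𝓝 (⨆ r, F r)) := tendsto_atTop_ciSup hFmono hFbdd
    have hdiv : Tendsto (fun t : ℝ => t / 2) atTop atTop :=
      tendsto_id.atTop_div_const two_pos
    have h2 : Tendsto (fun t => F t - F (t/2)) atTop (𝓝 ((⨆ r, F r) - (⨆ r, F r))) :=
      htend.sub (htend.comp hdiv)
    rw [sub_self] at h2
    refine h2.congr' ?_
    filter_upwards [eventually_ge_atTop (0:ℝ)] with t ht
    have hhalf0 : (0:ℝ) ≤ t / 2 := by linarith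
    have hhalf : t / 2 ≤ t := by linarith
    have hadd := intervalIntegral.integral_add_adjacent_intervals
      (hg_int 0 (t/2) le_rfl hhalf0) (hg_int (t/2) t hhalf0 hhalf)
    have e1 : max t 0 = t := max_eq_left ht
    have e2 : max (t/2) 0 = t/2 := max_eq_left hhalf0
    show F t - F (t/2) = ∫ s in (t/2)..t, g s
    rw [hFdef]
    simp only [e1, e2]
    linarith
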